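/- arXiv:1405.7784 — 2 statements merged into one kernel-verified Lean document; each statement's English description precedes it below -/
import Mathlib

section
/- Let λ be a super-growing parameter for f(z) = λ e^z, i.e. there is c ∈ (0, |λ|] with α_{n+1} ≥ c e^{α_n} eventually, where β_n = f^n(0), α_n = Re β_n. Set D = c/(4|λ|) ≤ 1/4. Then there exists l₀ such that for all l ≥ l₀, the ball B(β_l, 2D|β_l|) contains exactly one point of the forward orbit {β_n : n ≥ 0}, namely β_l itself. -/
open Filter

theorem stmt9 (lam : ℂ) (hlam : lam ≠ 0) (c : ℝ) (hc : 0 < c)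
    (hcle : c ≤ ‖lam‖)
    (β : ℕ → ℂ) (hβ : ∀ n, β n = (fun z => lam * Complex.exp z)^[n] 0)
    (htend : Tendsto (fun n => (β n).re) atTop atTop)
    (hsg : ∀ᶠ n in atTop, c * Real.exp ((β n).re) ≤ (β (n + 1)).re) :
    ∃ l₀ : ℕ, ∀ l ≥ l₀, ∀ n : ℕ,
      β n ∈ Metric.ball (β l) (2 * (c / (4 * ‖lam‖)) * ‖β l‖) →
        β n = β l := by
  set a := ‖lam‖ with ha
  have hapos : 0 < a := norm_pos_iff.mpr hlam
  have hstep : ∀ n, β (n + 1) = lam * Complex.exp (β n) := by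
    intro n
    rw [hβ (n + 1), hβ n, Function.iterate_succ_apply']
  have habs : ∀ n, ‖β (n + 1)‖ = a * Real.exp ((β n).re) := by
    intro n
    rw [hstep n, norm_mul, Complex.norm_exp]
  have hev : ∀ᶠ n in atTop,
      ((β n).re + Real.log 2 ≤ c * Real.exp ((β n).re)) ∧ 1 ≤ (β n).re ∧
        c * Real.exp ((β n).re) ≤ (β (n + 1)).re := by
    filter_upwards [htend.eventually_ge_atTop (max 1 (4 * (1 + Real.log 2) / c)), hsg]
      with n h1 h2
    have hx1 : (1 : ℝ) ≤ (β n).re := le_trans (le_max_left _ _) h1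
    have hx2 : 4 * (1 + Real.log 2) / c ≤ (β n).re := le_trans (le_max_right _ _) h1
    refine ⟨?_, hx1, h2⟩
    set x := (β n).re with hx
    have hexp : (x / 2 + 1) ^ 2 ≤ Real.exp x := by
      have h0 : 0 ≤ x / 2 + 1 := by linarith
      have he : x / 2 + 1 ≤ Real.exp (x / 2) := Real.add_one_le_exp _
      have : (x / 2 + 1) ^ 2 ≤ (Real.exp (x / 2)) ^ 2 := by nlinarith
      calc (x / 2 + 1) ^ 2 ≤ (Real.exp (x / 2)) ^ 2 := this
        _ = Real.exp x := by rw [sq, ← Real.exp_add]; norm_num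
    have hlog : Real.log 2 ≤ 1 := by
      have := Real.log_le_sub_one_of_pos (by norm_num : (0 : ℝ) < 2)
      linarith
    have hc4 : 4 * (1 + Real.log 2) ≤ c * x := by
      have := (div_le_iff₀ hc).mp hx2; linarith
    have hkey : 4 * (1 + Real.log 2) * x ≤ (c * x) * x :=
      mul_le_mul_of_nonneg_right hc4 (by linarith)
    nlinarith [Real.log_nonneg (by norm_num : (1 : ℝ) ≤ 2)]
  obtain ⟨N, hN⟩ := eventually_atTop.mp hev
  have hmono : ∀ n, N ≤ n → (β n).re + Real.log 2 ≤ (β (n + 1)).re :=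
    fun n hn => le_trans (hN n hn).1 (hN n hn).2.2
  have hdouble : ∀ q, N + 1 ≤ q → 2 * ‖β q‖ ≤ ‖β (q + 1)‖ := by
    intro q hq
    obtain ⟨m, rfl⟩ : ∃ m, q = m + 1 := ⟨q - 1, by omega⟩
    rw [habs m, habs (m + 1)]
    have h1 := hmono m (by omega)
    calc 2 * (a * Real.exp ((β m).re)) = a * Real.exp ((β m).re + Real.log 2) := by
          rw [Real.exp_add, Real.exp_log (by norm_num : (0:ℝ) < 2)]; ring
      _ ≤ a * Real.exp ((β (m + 1)).re) := by
          gcongr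
  have hgrow : ∀ m, N + 1 ≤ m → ∀ k, 2 ^ k * ‖β m‖ ≤ ‖β (m + k)‖ := by
    intro m hm k
    induction k with
    | zero => simp
    | succ k ih =>
      have h1 : 2 * (2 ^ k * ‖β m‖) ≤ 2 * ‖β (m + k)‖ := by linarith
      have h2 := hdouble (m + k) (le_trans hm (Nat.le_add_right m k))
      calc 2 ^ (k + 1) * ‖β m‖ = 2 * (2 ^ k * ‖β m‖) := by ring
        _ ≤ 2 * ‖β (m + k)‖ := h1
        _ ≤ ‖β (m + k + 1)‖ := h2
  -- bound on the first N+1 points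
  obtain ⟨M, hM⟩ : ∃ M, ∀ n ≤ N, ‖β n‖ ≤ M := by
    refine ⟨(Finset.range (N + 1)).sup' ⟨0, by simp⟩ (fun n => ‖β n‖), ?_⟩
    intro n hn
    exact Finset.le_sup' (fun n => ‖β n‖) (Finset.mem_range.mpr (by omega))
  obtain ⟨L, hL⟩ := eventually_atTop.mp (htend.eventually_ge_atTop (2 * M))
  refine ⟨max L (N + 1), fun l hl n hball => ?_⟩
  have hlL : L ≤ l := le_trans (le_max_left _ _) hl
  have hlN : N + 1 ≤ l := le_trans (le_max_right _ _) hl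
  rw [Metric.mem_ball, Complex.dist_eq] at hball
  have hrebl : (β l).re ≤ ‖β l‖ := Complex.re_le_norm _
  have hre1 : 1 ≤ (β l).re := (hN l (by omega)).2.1
  have hr : 2 * (c / (4 * a)) * ‖β l‖ ≤ ‖β l‖ / 2 := by
    have h12 : c / (2 * a) ≤ 1 / 2 := by
      rw [div_le_iff₀ (by positivity)]
      linarith
    have heq : 2 * (c / (4 * a)) = c / (2 * a) := by
      field_simp
      ring
    rw [heq]
    have hbnn : (0 : ℝ) ≤ ‖β l‖ := norm_nonneg _
    nlinarith
  rcases lt_trichotomy n l with h | h | h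
  · exfalso
    have hsmall : ‖β n‖ ≤ ‖β l‖ / 2 := by
      by_cases hn : n ≤ N
      · have h1 : ‖β n‖ ≤ M := hM n hn
        have h2 : 2 * M ≤ (β l).re := hL l hlL
        linarith
      · have hn' : N + 1 ≤ n := by omega
        have := hgrow n hn' (l - n)
        rw [show n + (l - n) = l by omega] at this
        have h2k : (2 : ℝ) ≤ 2 ^ (l - n) := by
          calc (2 : ℝ) = 2 ^ 1 := by norm_num
            _ ≤ 2 ^ (l - n) := by
              apply pow_le_pow_right₀ (by norm_num)
              omega
        nlinarith [norm_nonneg (β n)]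
    have hd : ‖β l‖ - ‖β n‖ ≤ ‖β n - β l‖ := by
      simpa [norm_sub_rev (β l) (β n)] using norm_sub_norm_le (β l) (β n)
    linarith
  · rw [h]
  · exfalso
    have := hgrow l hlN (n - l)
    rw [show l + (n - l) = n by omega] at this
    have h2k : (2 : ℝ) ≤ 2 ^ (n - l) := by
      calc (2 : ℝ) = 2 ^ 1 := by norm_num
        _ ≤ 2 ^ (n - l) := by
          apply pow_le_pow_right₀ (by norm_num)
          omega
    have hbig : 2 * ‖β l‖ ≤ ‖β n‖ := by
      nlinarith [norm_nonneg (β l)]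
    have hd : ‖β n‖ - ‖β l‖ ≤ ‖β n - β l‖ := by
      simpa using norm_sub_norm_le (β n) (β l)
    linarith
end

section
/- Let C ⊂ ℝ² be an indecomposable metric continuum (with more than one point). Then the 1-dimensional Hausdorff measure restricted to C is not σ-finite; i.e., C cannot be written as a countable union of measurable sets each of finite H¹ measure. -/
open MeasureTheory Set ENNReal Metric

lemma h1_of_connected {A : Set ℂ} (hA : IsPreconnected A) {a b : ℂ} (ha : a ∈ A) (hb : b ∈ A) :
    ENNReal.ofReal (dist b a) ≤ μH[1] A := by
  have hf : LipschitzWith 1 (fun x : ℂ => dist x a) := LipschitzWith.dist_left a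
  have hIcc : Set.Icc (dist a a) (dist b a) ⊆ (fun x : ℂ => dist x a) '' A :=
    hA.intermediate_value ha hb ((continuous_id.dist continuous_const).continuousOn)
  calc ENNReal.ofReal (dist b a) = μH[1] (Set.Icc (0:ℝ) (dist b a)) := by
        rw [MeasureTheory.hausdorffMeasure_real, Real.volume_Icc]; simp
    _ ≤ μH[1] ((fun x : ℂ => dist x a) '' A) := by
        refine measure_mono ?_
        simpa [dist_self] using hIcc
    _ ≤ (1:ℝ≥0∞) ^ (1:ℝ) * μH[1] A := hf.hausdorffMeasure_image_le (by norm_num) A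
    _ = μH[1] A := by simp

-- (*) : a nonempty relatively-clopen piece of closure (C \ K) must meet K
lemma clopen_piece_meets {C K P W : Set ℂ} (hCcl : IsClosed C) (hconn : IsPreconnected C)
    (hKC : K ⊆ C) (hKne : K.Nonempty) (hKcl : IsClosed K) (hW : IsOpen W)
    (hPB : P = W ∩ closure (C \ K)) (hPcl : IsClosed P) (hPne : P.Nonempty)
    (hPK : P ∩ K = ∅) : False := by
  have hBC : closure (C \ K) ⊆ C := by
    calc closure (C \ K) ⊆ closure C := closure_mono diff_subset
    _ = C := hCcl.closure_eq
  have hPu : P = C ∩ (W ∩ Kᶜ) := by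
    apply Subset.antisymm
    · intro y hy
      refine ⟨hBC (hPB ▸ hy).2, (hPB ▸ hy).1, fun hyK => ?_⟩
      exact absurd (mem_inter hy hyK) (by simp [hPK])
    · rintro y ⟨hyC, hyW, hyK⟩
      rw [hPB]
      exact ⟨hyW, subset_closure ⟨hyC, hyK⟩⟩
  obtain ⟨z, hz⟩ := hconn (W ∩ Kᶜ) Pᶜ (hW.inter hKcl.isOpen_compl) hPcl.isOpen_compl
    (fun y hyC => by
      by_cases hyP : y ∈ P
      · left; exact (hPu ▸ hyP).2
      · right; exact hyP)
    (by obtain ⟨p₀, hp₀⟩ := hPne; exact ⟨p₀, (hPu ▸ hp₀).1, (hPu ▸ hp₀).2⟩)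
    (by
      obtain ⟨k, hk⟩ := hKne
      refine ⟨k, hKC hk, fun hkP => ?_⟩
      exact absurd (mem_inter hkP hk) (by simp [hPK]))
  exact hz.2.2 (hPu ▸ ⟨hz.1, hz.2.1⟩)

-- K ∪ (relatively clopen piece of closure (C\K)) is preconnected
lemma union_piece_preconnected {C K P u : Set ℂ} (hCcl : IsClosed C) (hconn : IsPreconnected C)
    (hKs : K ⊆ C) (hKne : K.Nonempty) (hKcl : IsClosed K) (hKp : IsPreconnected K)
    (hu : IsOpen u) (hP : P = u ∩ closure (C \ K)) (hPcl : IsClosed P) :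
    IsPreconnected (K ∪ P) := by
  have key : ∀ u' v' : Set ℂ, IsOpen u' → IsOpen v' → K ∪ P ⊆ u' ∪ v' →
      (K ∪ P) ∩ (u' ∩ v') = ∅ → K ∩ v' = ∅ → ((K ∪ P) ∩ v').Nonempty → False := by
    intro u' v' hu' hv' hsub hA1e hKv hSne
    set S := (K ∪ P) ∩ v' with hSdef
    have hSP : S = (u ∩ v') ∩ closure (C \ K) := by
      apply Subset.antisymm
      · rintro y ⟨hyKP, hyv'⟩
        rcases hyKP with hyK | hyP
        · exact absurd (mem_inter hyK hyv') (by simp [hKv])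
        · exact ⟨⟨(hP ▸ hyP).1, hyv'⟩, (hP ▸ hyP).2⟩
      · rintro y ⟨⟨hyu, hyv'⟩, hyB⟩
        exact ⟨Or.inr (hP ▸ ⟨hyu, hyB⟩), hyv'⟩
    have hScl : IsClosed S := by
      have : S = (K ∪ P) ∩ u'ᶜ := by
        apply Subset.antisymm
        · rintro y ⟨hyKP, hyv'⟩
          refine ⟨hyKP, fun hyu' => ?_⟩
          exact absurd (show y ∈ (K ∪ P) ∩ (u' ∩ v') from ⟨hyKP, hyu', hyv'⟩) (by simp [hA1e])
        · rintro y ⟨hyKP, hyu'⟩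
          rcases hsub hyKP with h | h
          · exact absurd h hyu'
          · exact ⟨hyKP, h⟩
      rw [this]
      exact (hKcl.union hPcl).inter hu'.isClosed_compl
    have hSK : S ∩ K = ∅ := by
      rw [Set.eq_empty_iff_forall_notMem]
      rintro y ⟨⟨_, hyv'⟩, hyK⟩
      exact absurd (mem_inter hyK hyv') (by simp [hKv])
    exact clopen_piece_meets hCcl hconn hKs hKne hKcl (hu.inter hv') hSP hScl hSne hSK
  intro u' v' hu' hv' hsub h1 h2
  by_contra hcon
  have hA1e : (K ∪ P) ∩ (u' ∩ v') = ∅ := not_nonempty_iff_eq_empty.mp hcon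
  have hKcase : K ∩ v' = ∅ ∨ K ∩ u' = ∅ := by
    by_contra h
    push_neg at h
    obtain ⟨hv1, hu1⟩ := h
    obtain ⟨y, hy⟩ := hKp u' v' hu' hv' ((subset_union_left).trans hsub)
      hu1 hv1
    exact absurd (show y ∈ (K ∪ P) ∩ (u' ∩ v') from ⟨Or.inl hy.1, hy.2⟩) (by simp [hA1e])
  rcases hKcase with h | h
  · exact absurd (key u' v' hu' hv' hsub hA1e h h2) id
  · refine absurd (key v' u' hv' hu' (by rwa [union_comm v' u']) (by rwa [inter_comm v' u']) h h1) id

-- every proper subcontinuum of an indecomposable continuum has empty interior (in C)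
lemma no_interior {C : Set ℂ} (hC : IsCompact C) (hconn : IsConnected C)
    (hind : ¬∃ A B : Set ℂ, A ⊆ C ∧ B ⊆ C ∧ IsCompact A ∧ IsConnected A ∧
        IsCompact B ∧ IsConnected B ∧ A ≠ C ∧ B ≠ C ∧ A ∪ B = C)
    {K : Set ℂ} (hKs : K ⊆ C) (hK : IsCompact K) (hKc : IsConnected K) (hKne : K ≠ C)
    {V : Set ℂ} (hV : IsOpen V) (hVK : V ∩ C ⊆ K) (hVne : (V ∩ C).Nonempty) : False := by
  set B : Set ℂ := closure (C \ K) with hBdef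
  have hCcl : IsClosed C := hC.isClosed
  have hBC : B ⊆ C := by
    calc closure (C \ K) ⊆ closure C := closure_mono diff_subset
    _ = C := hCcl.closure_eq
  have hBcomp : IsCompact B := hC.of_isClosed_subset isClosed_closure hBC
  have hCKne : (C \ K).Nonempty := by
    rcases Set.exists_of_ssubset (hKs.ssubset_of_ne hKne) with ⟨c, hc, hcK⟩
    exact ⟨c, hc, hcK⟩
  have hBne : B.Nonempty := hCKne.mono subset_closure
  have hKCne : K.Nonempty := hVne.mono hVK
  have hKcl : IsClosed K := hK.isClosed
  have hBneC : B ≠ C := by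
    obtain ⟨x, hxV, hxC⟩ := hVne
    intro hBC'
    have hxB : x ∈ B := hBC' ▸ hxC
    rw [hBdef, _root_.mem_closure_iff] at hxB
    obtain ⟨y, hyV, hyC, hyK⟩ := hxB V hV hxV
    exact hyK (hVK ⟨hyV, hyC⟩)
  have hKB : K ∪ B = C := by
    apply Subset.antisymm (union_subset hKs hBC)
    intro y hy
    by_cases hyK : y ∈ K
    · exact Or.inl hyK
    · exact Or.inr (subset_closure ⟨hy, hyK⟩)
  by_cases hBp : IsPreconnected B
  · exact hind ⟨K, B, hKs, hBC, hK, hKc, hBcomp, ⟨hBne, hBp⟩, hKne, hBneC, hKB⟩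
  · rw [IsPreconnected] at hBp
    push_neg at hBp
    obtain ⟨u, v, hu, hv, hBuv, hBu, hBv, hBuve⟩ := hBp
    have hBuve' : B ∩ (u ∩ v) = ∅ := hBuve
    set P := u ∩ B with hPdef
    set Q := v ∩ B with hQdef
    have hPv : ∀ y ∈ P, y ∉ v := by
      rintro y ⟨hyu, hyB⟩ hyv
      exact absurd (show y ∈ B ∩ (u ∩ v) from ⟨hyB, hyu, hyv⟩) (by simp [hBuve'])
    have hQu : ∀ y ∈ Q, y ∉ u := by
      rintro y ⟨hyv, hyB⟩ hyu
      exact absurd (show y ∈ B ∩ (u ∩ v) from ⟨hyB, hyu, hyv⟩) (by simp [hBuve'])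
    have hPcl : IsClosed P := by
      have : P = B ∩ vᶜ := by
        apply Subset.antisymm
        · exact fun y hy => ⟨hy.2, hPv y hy⟩
        · rintro y ⟨hyB, hyv⟩
          rcases hBuv hyB with h | h
          · exact ⟨h, hyB⟩
          · exact absurd h hyv
      rw [this]
      exact isClosed_closure.inter hv.isClosed_compl
    have hQcl : IsClosed Q := by
      have : Q = B ∩ uᶜ := by
        apply Subset.antisymm
        · exact fun y hy => ⟨hy.2, hQu y hy⟩
        · rintro y ⟨hyB, hyu⟩
          rcases hBuv hyB with h | h
          · exact absurd h hyu
          · exact ⟨h, hyB⟩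
      rw [this]
      exact isClosed_closure.inter hu.isClosed_compl
    -- density: each of P, Q contains a point of C \ K
    have density : ∀ w : Set ℂ, IsOpen w → (B ∩ w).Nonempty →
        ∃ y, y ∈ w ∩ B ∧ y ∉ K := by
      intro w hw ⟨q0, hq0B, hq0w⟩
      rw [hBdef, _root_.mem_closure_iff] at hq0B
      obtain ⟨y, hyw, hyC, hyK⟩ := hq0B w hw hq0w
      exact ⟨y, ⟨hyw, subset_closure ⟨hyC, hyK⟩⟩, hyK⟩
    obtain ⟨yQ, hyQ, hyQK⟩ := density v hv hBv
    obtain ⟨yP, hyP, hyPK⟩ := density u hu hBu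
    -- the two halves
    refine hind ⟨K ∪ P, K ∪ Q, union_subset hKs (hPdef ▸ inter_subset_right.trans hBC),
      union_subset hKs (hQdef ▸ inter_subset_right.trans hBC),
      hK.union (hBcomp.of_isClosed_subset hPcl inter_subset_right),
      ⟨hKCne.mono subset_union_left,
        union_piece_preconnected hCcl hconn.isPreconnected hKs hKCne hKcl hKc.isPreconnected hu hPdef hPcl⟩,
      hK.union (hBcomp.of_isClosed_subset hQcl inter_subset_right),
      ⟨hKCne.mono subset_union_left,
        union_piece_preconnected hCcl hconn.isPreconnected hKs hKCne hKcl hKc.isPreconnected hv hQdef hQcl⟩,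
      ?_, ?_, ?_⟩
    · -- K ∪ P ≠ C : yQ ∈ C but not in K ∪ P
      intro hEq
      have : yQ ∈ K ∪ P := hEq ▸ hBC hyQ.2
      rcases this with h | h
      · exact hyQK h
      · exact hPv yQ h hyQ.1
    · intro hEq
      have : yP ∈ K ∪ Q := hEq ▸ hBC hyP.2
      rcases this with h | h
      · exact hyPK h
      · exact hQu yP h hyP.1
    · rw [union_union_union_comm, union_self]
      have : P ∪ Q = B := by
        apply Subset.antisymm (union_subset inter_subset_right inter_subset_right)
        intro y hyB
        rcases hBuv hyB with h | h
        · exact Or.inl ⟨h, hyB⟩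
        · exact Or.inr ⟨h, hyB⟩
      rw [this, hKB]

-- boundary bumping: the component of p in C \ ball a r contains a point at distance ≤ r from a
lemma bumping {C : Set ℂ} (hC : IsCompact C) (hconn : IsConnected C) {p a : ℂ}
    (hp : p ∈ C) (ha : a ∈ C) {r : ℝ} (hr : 0 < r) (hpa : r < dist p a) :
    ∃ y ∈ connectedComponentIn (C \ Metric.ball a r) p, dist y a ≤ r := by
  by_contra hcon
  push_neg at hcon
  set F : Set ℂ := C \ Metric.ball a r with hFdef
  have hFcl : IsClosed F := hC.isClosed.sdiff Metric.isOpen_ball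
  have hFC : F ⊆ C := diff_subset
  have hFcomp : IsCompact F := hC.of_isClosed_subset hFcl hFC
  have hpF : p ∈ F := ⟨hp, by simp [Metric.mem_ball, hpa.le]⟩
  haveI : CompactSpace F := isCompact_iff_compactSpace.mp hFcomp
  set x₀ : F := ⟨p, hpF⟩ with hx₀
  have hcc := connectedComponent_eq_iInter_isClopen x₀
  set D : Set F := {y : F | dist (y : ℂ) a ≤ r} with hDdef
  have hDcl : IsClosed D :=
    isClosed_le (continuous_subtype_val.dist continuous_const) continuous_const
  have hDcomp : IsCompact D := hDcl.isCompact
  have hdisj : D ∩ ⋂ s : { s : Set F // IsClopen s ∧ x₀ ∈ s }, (s : Set F) = ∅ := by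
    rw [← hcc, Set.eq_empty_iff_forall_notMem]
    rintro y ⟨hyD, hyc⟩
    have : (y : ℂ) ∈ connectedComponentIn F p := by
      rw [connectedComponentIn_eq_image hpF]
      exact ⟨y, hyc, rfl⟩
    exact absurd hyD (by simp only [hDdef, mem_setOf_eq, not_le]; exact hcon _ this)
  obtain ⟨t, ht⟩ := hDcomp.elim_finite_subfamily_closed _ (fun s => s.2.1.1) hdisj
  set V : Set F := ⋂ i ∈ t, (i : { s : Set F // IsClopen s ∧ x₀ ∈ s }) with hVdef
  have hVclopen : IsClopen V := isClopen_biInter_finset (fun i _ => i.2.1)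
  have hx₀V : x₀ ∈ V := mem_iInter₂.mpr fun i _ => i.2.2
  have hVD : ∀ y ∈ V, y ∉ D := by
    intro y hy hyD
    exact absurd (show y ∈ D ∩ ⋂ i ∈ t, (i : { s : Set F // IsClopen s ∧ x₀ ∈ s }) from ⟨hyD, hy⟩)
      (by rw [ht]; simp)
  -- push V to the ambient space
  set V' : Set ℂ := Subtype.val '' V with hV'def
  have hV'comp : IsCompact V' := (hVclopen.1.isCompact).image continuous_subtype_val
  have hV'cl : IsClosed V' := hV'comp.isClosed
  have hV'far : ∀ y ∈ V', r < dist y a := by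
    rintro y ⟨z, hz, rfl⟩
    by_contra h
    exact hVD z hz (by simpa [hDdef] using not_lt.mp h)
  obtain ⟨W, hWopen, hWV⟩ := isOpen_induced_iff.mp hVclopen.2
  have hV'W : V' = W ∩ F := by
    rw [hV'def, ← hWV, Subtype.image_preimage_coe, inter_comm]
  -- now contradict connectedness of C
  have hO : IsOpen {y : ℂ | r < dist y a} :=
    isOpen_lt continuous_const (continuous_id.dist continuous_const)
  obtain ⟨z, hz⟩ := hconn.isPreconnected (W ∩ {y : ℂ | r < dist y a}) V'ᶜ
    (hWopen.inter hO) hV'cl.isOpen_compl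
    (fun y hyC => by
      by_cases hyV : y ∈ V'
      · left
        exact ⟨(hV'W ▸ hyV).1, hV'far y hyV⟩
      · right; exact hyV)
    (by
      have hpV' : p ∈ V' := ⟨x₀, hx₀V, rfl⟩
      exact ⟨p, hp, (hV'W ▸ hpV').1, hpa⟩)
    ⟨a, ha, fun haV => absurd (hV'far a haV) (by simp [hr.le, dist_self])⟩
  refine hz.2.2 ?_
  rw [hV'W]
  refine ⟨hz.2.1.1, hz.1, ?_⟩
  simp only [Metric.mem_ball, mem_setOf_eq] at *
  exact not_lt.mpr hz.2.1.2.le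

-- proper subcontinuum
def psub (C K : Set ℂ) : Prop := K ⊆ C ∧ IsCompact K ∧ IsConnected K ∧ K ≠ C

-- composant
def kappa (C : Set ℂ) (p : ℂ) : Set ℂ := ⋃₀ {K | psub C K ∧ p ∈ K}

lemma kappa_subset (C : Set ℂ) (p : ℂ) : kappa C p ⊆ C := by
  rintro y ⟨K, ⟨⟨hKC, _, _, _⟩, _⟩, hyK⟩
  exact hKC hyK

lemma mem_kappa_self {C : Set ℂ} (hnt : C.Nontrivial) {p : ℂ} (hp : p ∈ C) : p ∈ kappa C p := by
  refine ⟨{p}, ⟨⟨singleton_subset_iff.mpr hp, isCompact_singleton, isConnected_singleton, ?_⟩,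
    rfl⟩, rfl⟩
  obtain ⟨a, ha, b, hb, hab⟩ := hnt
  intro h
  by_cases hpa : p = a
  · have : b ∈ ({p} : Set ℂ) := h ▸ hb
    simp only [mem_singleton_iff] at this
    exact hab (hpa ▸ this ▸ rfl)
  · have : a ∈ ({p} : Set ℂ) := h ▸ ha
    simp only [mem_singleton_iff] at this
    exact hpa this.symm

lemma kappa_preconnected (C : Set ℂ) (p : ℂ) : IsPreconnected (kappa C p) :=
  isPreconnected_sUnion p _ (fun _ hs => hs.2) (fun _ hs => hs.1.2.2.1.isPreconnected)

lemma psub_union {C : Set ℂ}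
    (hind : ¬∃ A B : Set ℂ, A ⊆ C ∧ B ⊆ C ∧ IsCompact A ∧ IsConnected A ∧
        IsCompact B ∧ IsConnected B ∧ A ≠ C ∧ B ≠ C ∧ A ∪ B = C)
    {K L : Set ℂ} (hK : psub C K) (hL : psub C L) (hKL : (K ∩ L).Nonempty) :
    psub C (K ∪ L) := by
  obtain ⟨hKC, hKcpt, hKconn, hKne⟩ := hK
  obtain ⟨hLC, hLcpt, hLconn, hLne⟩ := hL
  refine ⟨union_subset hKC hLC, hKcpt.union hLcpt, hKconn.union hKL hLconn, ?_⟩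
  intro h
  exact hind ⟨K, L, hKC, hLC, hKcpt, hKconn, hLcpt, hLconn, hKne, hLne, h⟩

lemma kappa_subset_of_mem {C : Set ℂ}
    (hind : ¬∃ A B : Set ℂ, A ⊆ C ∧ B ⊆ C ∧ IsCompact A ∧ IsConnected A ∧
        IsCompact B ∧ IsConnected B ∧ A ≠ C ∧ B ≠ C ∧ A ∪ B = C)
    {p q r : ℂ} (hrp : r ∈ kappa C p) (hrq : r ∈ kappa C q) : kappa C p ⊆ kappa C q := by
  obtain ⟨K, ⟨hK, hpK⟩, hrK⟩ := hrp
  obtain ⟨L, ⟨hL, hqL⟩, hrL⟩ := hrq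
  rintro y ⟨M, ⟨hM, hpM⟩, hyM⟩
  have hMK : psub C (M ∪ K) := psub_union hind hM hK ⟨p, hpM, hpK⟩
  have hMKL : psub C (M ∪ K ∪ L) := psub_union hind hMK hL ⟨r, Or.inr hrK, hrL⟩
  exact ⟨M ∪ K ∪ L, ⟨hMKL, Or.inr hqL⟩, Or.inl (Or.inl hyM)⟩

lemma kappa_nontrivial {C : Set ℂ} (hC : IsCompact C) (hconn : IsConnected C)
    (hnt : C.Nontrivial) {p : ℂ} (hp : p ∈ C) : ∃ y ∈ kappa C p, y ≠ p := by
  -- find a ∈ C with a ≠ p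
  obtain ⟨a', ha', b', hb', hab'⟩ := hnt
  obtain ⟨a, ha, hap⟩ : ∃ a ∈ C, a ≠ p := by
    by_cases h : a' = p
    · exact ⟨b', hb', fun hh => hab' (by rw [h, hh])⟩
    · exact ⟨a', ha', h⟩
  set r := dist p a / 2 with hrdef
  have hr : 0 < r := by
    have : 0 < dist p a := dist_pos.mpr (fun h => hap h.symm)
    rw [hrdef]; linarith
  have hpa : r < dist p a := by
    have : 0 < dist p a := dist_pos.mpr (fun h => hap h.symm)
    rw [hrdef]; linarith
  obtain ⟨y, hycc, hyr⟩ := bumping hC hconn hp ha hr hpa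
  set F : Set ℂ := C \ Metric.ball a r with hFdef
  have hFcl : IsClosed F := hC.isClosed.sdiff Metric.isOpen_ball
  set K := closure (connectedComponentIn F p) with hKdef
  have hKF : K ⊆ F := hFcl.closure_subset_iff.mpr (connectedComponentIn_subset F p)
  have hpF : p ∈ F := ⟨hp, by simp [Metric.mem_ball, hpa.le]⟩
  have hKsub : psub C K := by
    refine ⟨hKF.trans diff_subset, hC.of_isClosed_subset isClosed_closure (hKF.trans diff_subset),
      ⟨⟨p, subset_closure (mem_connectedComponentIn hpF)⟩,
        isPreconnected_connectedComponentIn.closure⟩, ?_⟩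
    intro h
    have : a ∈ F := hKF (h ▸ ha)
    exact this.2 (by simp [Metric.mem_ball, hr])
  refine ⟨y, ⟨K, ⟨hKsub, subset_closure (mem_connectedComponentIn hpF)⟩,
    subset_closure hycc⟩, ?_⟩
  intro h
  rw [h] at hyr
  exact absurd hyr (not_le.mpr hpa)

open scoped Classical in
noncomputable def pcs (C : Set ℂ) (x : ℕ → ℂ) (p : ℂ) (k m : ℕ) : Set ℂ :=
  if (Metric.ball (x k) (1/(m+1 : ℝ)) ∩ C).Nonempty ∧ p ∉ Metric.ball (x k) (1/(m+1 : ℝ))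
  then closure (connectedComponentIn (C \ Metric.ball (x k) (1/(m+1 : ℝ))) p) else ∅

lemma pcs_closed (C : Set ℂ) (x : ℕ → ℂ) (p : ℂ) (k m : ℕ) : IsClosed (pcs C x p k m) := by
  rw [pcs]
  split_ifs
  · exact isClosed_closure
  · exact isClosed_empty

lemma pcs_cases {C : Set ℂ} (hC : IsCompact C) (x : ℕ → ℂ) {p : ℂ} (hp : p ∈ C) (k m : ℕ) :
    pcs C x p k m = ∅ ∨ (psub C (pcs C x p k m) ∧ pcs C x p k m ⊆ kappa C p) := by
  rw [pcs]
  split_ifs with h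
  swap
  · exact Or.inl rfl
  obtain ⟨⟨c, hcb, hcC⟩, hpb⟩ := h
  right
  set F : Set ℂ := C \ Metric.ball (x k) (1/(m+1 : ℝ)) with hFdef
  have hFcl : IsClosed F := hC.isClosed.sdiff Metric.isOpen_ball
  have hKF : closure (connectedComponentIn F p) ⊆ F :=
    hFcl.closure_subset_iff.mpr (connectedComponentIn_subset F p)
  have hpF : p ∈ F := ⟨hp, hpb⟩
  have hKsub : psub C (closure (connectedComponentIn F p)) := by
    refine ⟨hKF.trans diff_subset, hC.of_isClosed_subset isClosed_closure (hKF.trans diff_subset),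
      ⟨⟨p, subset_closure (mem_connectedComponentIn hpF)⟩,
        isPreconnected_connectedComponentIn.closure⟩, ?_⟩
    intro hEq
    exact (hKF (hEq ▸ hcC)).2 hcb
  exact ⟨hKsub, fun y hy => ⟨_, ⟨hKsub, subset_closure (mem_connectedComponentIn hpF)⟩, hy⟩⟩

lemma pcs_cover {C : Set ℂ} (hC : IsCompact C) {x : ℕ → ℂ} (hx : DenseRange x) {p : ℂ}
    (hp : p ∈ C) : kappa C p ⊆ ⋃ k, ⋃ m, pcs C x p k m := by
  rintro y ⟨K, ⟨⟨hKC, hKcpt, hKconn, hKne⟩, hpK⟩, hyK⟩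
  obtain ⟨q, hqC, hqK⟩ := Set.exists_of_ssubset (hKC.ssubset_of_ne hKne)
  set δ := Metric.infDist q K with hδdef
  have hδ : 0 < δ := (hKcpt.isClosed.notMem_iff_infDist_pos ⟨p, hpK⟩).mp hqK
  obtain ⟨m, hm⟩ := exists_nat_one_div_lt (show (0:ℝ) < δ/3 by linarith)
  have hmpos : (0:ℝ) < 1/(m+1 : ℝ) := by positivity
  obtain ⟨k, hk⟩ := hx.exists_dist_lt q hmpos
  have hdistK : ∀ z ∈ K, ¬ z ∈ Metric.ball (x k) (1/(m+1 : ℝ)) := by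
    intro z hz hzb
    rw [Metric.mem_ball] at hzb
    have h1 : δ ≤ dist q z := Metric.infDist_le_dist_of_mem hz
    have h2 : dist q z ≤ dist q (x k) + dist (x k) z := dist_triangle q (x k) z
    rw [dist_comm z (x k)] at hzb
    linarith
  have hguard : (Metric.ball (x k) (1/(m+1 : ℝ)) ∩ C).Nonempty ∧
      p ∉ Metric.ball (x k) (1/(m+1 : ℝ)) := by
    constructor
    · exact ⟨q, by rwa [Metric.mem_ball], hqC⟩
    · exact hdistK p hpK
  have hKF : K ⊆ C \ Metric.ball (x k) (1/(m+1 : ℝ)) := fun z hz => ⟨hKC hz, hdistK z hz⟩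
  refine mem_iUnion.mpr ⟨k, mem_iUnion.mpr ⟨m, ?_⟩⟩
  rw [pcs, if_pos hguard]
  exact subset_closure
    ((hKconn.isPreconnected.subset_connectedComponentIn hpK hKF) hyK)

theorem stmt14 (C : Set ℂ) (hC : IsCompact C) (hconn : IsConnected C)
    (hnt : C.Nontrivial)
    (hind : ¬∃ A B : Set ℂ, A ⊆ C ∧ B ⊆ C ∧ IsCompact A ∧ IsConnected A ∧
        IsCompact B ∧ IsConnected B ∧ A ≠ C ∧ B ≠ C ∧ A ∪ B = C) :
    ¬∃ s : ℕ → Set ℂ, (∀ n, MeasurableSet (s n)) ∧ (∀ n, s n ⊆ C) ∧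
        C = ⋃ n, s n ∧ ∀ n, μH[1] (s n) < ⊤ := by
  rintro ⟨s, hmeas, hssub, hcover, hfin⟩
  have hmC : MeasurableSet C := hC.isClosed.measurableSet
  set μ' : Measure ℂ := μH[1].restrict C with hμ'
  haveI : SigmaFinite μ' := by
    refine ⟨⟨⟨fun n => s n ∪ Cᶜ, fun n => mem_univ _, fun n => ?_, ?_⟩⟩⟩
    · rw [hμ', Measure.restrict_apply ((hmeas n).union hmC.compl)]
      refine lt_of_le_of_lt (measure_mono ?_) (hfin n)
      rintro y ⟨hy1, hy2⟩
      rcases hy1 with h | h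
      · exact h
      · exact absurd hy2 h
    · apply eq_univ_of_forall
      intro y
      by_cases hy : y ∈ C
      · rw [hcover] at hy
        obtain ⟨n, hn⟩ := mem_iUnion.mp hy
        exact mem_iUnion.mpr ⟨n, Or.inl hn⟩
      · exact mem_iUnion.mpr ⟨0, Or.inr hy⟩
  obtain ⟨x, hx⟩ := TopologicalSpace.exists_dense_seq ℂ
  have hkmeas : ∀ p ∈ C, MeasurableSet (kappa C p) := by
    intro p hp
    have hrepr : kappa C p = ⋃ k, ⋃ m, pcs C x p k m := by
      apply Subset.antisymm (pcs_cover hC hx hp)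
      intro y hy
      obtain ⟨k, hk⟩ := mem_iUnion.mp hy
      obtain ⟨m, hm⟩ := mem_iUnion.mp hk
      rcases pcs_cases hC x hp k m with h | h
      · rw [h] at hm; exact absurd hm (notMem_empty _)
      · exact h.2 hm
    rw [hrepr]
    exact MeasurableSet.iUnion fun k => MeasurableSet.iUnion fun m =>
      (pcs_closed C x p k m).measurableSet
  have hkpos : ∀ p ∈ C, 0 < μ' (kappa C p) := by
    intro p hp
    obtain ⟨y, hy, hyp⟩ := kappa_nontrivial hC hconn hnt hp
    have h1 : ENNReal.ofReal (dist y p) ≤ μH[1] (kappa C p) :=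
      h1_of_connected (kappa_preconnected C p) (mem_kappa_self hnt hp) hy
    have h2 : μ' (kappa C p) = μH[1] (kappa C p) := by
      rw [hμ', Measure.restrict_apply (hkmeas p hp), inter_eq_left.mpr (kappa_subset C p)]
    rw [h2]
    exact lt_of_lt_of_le (ENNReal.ofReal_pos.mpr (dist_pos.mpr hyp)) h1
  set T : Set (Set ℂ) := kappa C '' C with hT
  have hTdisj : Pairwise (Function.onFun Disjoint fun E : ↥T => (E : Set ℂ)) := by
    rintro ⟨E, hE⟩ ⟨E', hE'⟩ hne
    simp only [Function.onFun]
    rw [Set.disjoint_left]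
    intro r hrE hrE'
    apply hne
    obtain ⟨p, hp, rfl⟩ := hE
    obtain ⟨q, hq, rfl⟩ := hE'
    have h1 := kappa_subset_of_mem hind hrE hrE'
    have h2 := kappa_subset_of_mem hind hrE' hrE
    exact Subtype.ext (Subset.antisymm h1 h2)
  have hTmeas : ∀ E : ↥T, MeasurableSet (E : Set ℂ) := by
    rintro ⟨E, hE⟩
    obtain ⟨p, hp, rfl⟩ := hE
    exact hkmeas p hp
  have hTc : T.Countable := by
    have hcnt := Measure.countable_meas_pos_of_disjoint_iUnion (μ := μ') hTmeas hTdisj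
    have huniv : {i : ↥T | 0 < μ' (i : Set ℂ)} = univ := by
      apply eq_univ_of_forall
      rintro ⟨E, hE⟩
      obtain ⟨p, hp, rfl⟩ := hE
      exact hkpos p hp
    rw [huniv] at hcnt
    rw [← Set.countable_coe_iff]
    exact countable_univ_iff.mp hcnt
  haveI : Countable ↥T := hTc.to_subtype
  haveI : CompactSpace ↥C := isCompact_iff_compactSpace.mp hC
  haveI : Nonempty ↥C := nonempty_coe_sort.mpr hnt.nonempty
  have hrep : ∀ E : ↥T, ∃ p, p ∈ C ∧ kappa C p = (E : Set ℂ) := by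
    rintro ⟨E, hE⟩
    obtain ⟨p, hp, h⟩ := hE
    exact ⟨p, hp, h⟩
  choose rep hrepC hrepE using hrep
  set g : ↥T × ℕ × ℕ → Set ↥C := fun j => Subtype.val ⁻¹' (pcs C x (rep j.1) j.2.1 j.2.2) with hg
  have hgcl : ∀ j, IsClosed (g j) := fun j => (pcs_closed _ _ _ _ _).preimage continuous_subtype_val
  have hgcov : ⋃ j, g j = univ := by
    apply eq_univ_of_forall
    rintro ⟨y, hy⟩
    have h1 : y ∈ kappa C y := mem_kappa_self hnt hy
    have hET : kappa C y ∈ T := mem_image_of_mem _ hy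
    have h2 : y ∈ kappa C (rep ⟨kappa C y, hET⟩) := by
      rw [hrepE ⟨kappa C y, hET⟩]; exact h1
    have h3 := pcs_cover hC hx (hrepC ⟨kappa C y, hET⟩) h2
    obtain ⟨k, hk⟩ := mem_iUnion.mp h3
    obtain ⟨m, hm⟩ := mem_iUnion.mp hk
    exact mem_iUnion.mpr ⟨⟨⟨kappa C y, hET⟩, k, m⟩, hm⟩
  obtain ⟨j, z, hz⟩ := nonempty_interior_of_iUnion_of_closed hgcl hgcov
  obtain ⟨W, hWopen, hWeq⟩ := isOpen_induced_iff.mp (isOpen_interior (s := g j))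
  have hz' : (z : ℂ) ∈ W := by
    have : z ∈ Subtype.val ⁻¹' W := by rw [hWeq]; exact hz
    exact this
  have hsubW : W ∩ C ⊆ pcs C x (rep j.1) j.2.1 j.2.2 := by
    rintro w ⟨hwW, hwC⟩
    have hmem : (⟨w, hwC⟩ : ↥C) ∈ interior (g j) := by rw [← hWeq]; exact hwW
    exact (interior_subset (s := g j)) hmem
  have hne : (W ∩ C).Nonempty := ⟨z, hz', z.2⟩
  rcases pcs_cases hC x (hrepC j.1) j.2.1 j.2.2 with h | h
  · rw [h] at hsubW
    exact absurd (hsubW ⟨hz', z.2⟩) (notMem_empty _)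
  · obtain ⟨⟨hs1, hs2, hs3, hs4⟩, _⟩ := h
    exact no_interior hC hconn hind hs1 hs2 hs3 hs4 hWopen hsubW hne
end
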